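/- Let 0 ≤ β ≤ α ≤ 1 and 0 ≤ β' ≤ α' ≤ 1, and consider the wave packet coverings Q^(α,β) and Q^(α',β') (built with the same N = 10 and with parameters ε, ε' ∈ (0,1/32) respectively). For all (j,m,ℓ) ∈ I₀^(α,β) and (j',m',ℓ') ∈ I₀^(α',β'): if Q_{j,m,ℓ}^(α,β) ∩ Q_{j',m',ℓ'}^(α',β') ≠ ∅, then |j − j'| ≤ 4. -/
import Mathlib


noncomputable section

open Real Set MeasureTheory Pointwise
open scoped ENNReal

/-- `ℝ²` with the Euclidean norm. -/
abbrev R2 : Type := EuclideanSpace ℝ (Fin 2)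

/-- The vector `(a, b) ∈ ℝ²`. -/
def vec2 (a b : ℝ) : R2 := (EuclideanSpace.equiv (Fin 2) ℝ).symm ![a, b]

/-- Action of a `2×2` matrix on `ℝ²`. -/
def mulV (M : Matrix (Fin 2) (Fin 2) ℝ) (x : R2) : R2 :=
  (EuclideanSpace.equiv (Fin 2) ℝ).symm (M.mulVec ((EuclideanSpace.equiv (Fin 2) ℝ) x))

/-- Rotation matrix through the angle `θ`. -/
def Rmat (θ : ℝ) : Matrix (Fin 2) (Fin 2) ℝ :=
  !![Real.cos θ, -Real.sin θ; Real.sin θ, Real.cos θ]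

/-- The diagonal matrix `A_j = diag(2^{αj}, 2^{βj})`. -/
def Amat (α β : ℝ) (j : ℕ) : Matrix (Fin 2) (Fin 2) ℝ :=
  !![(2:ℝ) ^ (α * (j:ℝ)), 0; 0, (2:ℝ) ^ (β * (j:ℝ))]

/-- The angle `Θ_{j,ℓ} = 2ℓ·(π/N)·2^{(β − 1)j}`, with `N = 10`. -/
def Theta (β : ℝ) (j ℓ : ℕ) : ℝ :=
  2 * (ℓ:ℝ) * (Real.pi / 10) * (2:ℝ) ^ ((β - 1) * (j:ℝ))

/-- The translation `c_{j,m} = (2^{j−1} + m·2^{αj}, 0)ᵗ`. -/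
def cvec (α : ℝ) (j m : ℕ) : R2 :=
  vec2 ((2:ℝ) ^ ((j:ℝ) - 1) + (m:ℝ) * (2:ℝ) ^ (α * (j:ℝ))) 0

/-- The base set `Q = (−ε, 1+ε) × (−1−ε, 1+ε)`. -/
def baseQ (ε : ℝ) : Set R2 :=
  {x : R2 | x 0 ∈ Set.Ioo (-ε) (1+ε) ∧ x 1 ∈ Set.Ioo (-1-ε) (1+ε)}

/-- `m_j^max = ⌈2^{(1−α)j−1}⌉`. -/
def mjmax (α : ℝ) (j : ℕ) : ℤ := ⌈(2:ℝ) ^ ((1-α) * (j:ℝ) - 1)⌉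

/-- `ℓ_j^max = ⌈N·2^{(1−β)j}⌉`, with `N = 10`. -/
def ljmax (β : ℝ) (j : ℕ) : ℤ := ⌈(10:ℝ) * (2:ℝ) ^ ((1-β) * (j:ℝ))⌉

/-- Membership of a triple `(j,m,ℓ)` in the index set
`I₀ = {(j,m,ℓ) ∈ ℕ × ℕ₀ × ℕ₀ : m ≤ m_j^max, ℓ ≤ ℓ_j^max}` (with `ℕ = {1,2,…}`). -/
def memI0 (α β : ℝ) (i : ℕ × ℕ × ℕ) : Prop :=
  1 ≤ i.1 ∧ (i.2.1 : ℤ) ≤ mjmax α i.1 ∧ (i.2.2 : ℤ) ≤ ljmax β i.1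

/-- The set `Q_{j,m,ℓ} = R_{j,ℓ}(A_j·Q + c_{j,m})`. -/
def Qset (α β ε : ℝ) (j m ℓ : ℕ) : Set R2 :=
  (fun x => mulV (Rmat (Theta β j ℓ)) (mulV (Amat α β j) x + cvec α j m)) '' baseQ ε

lemma mulV_apply0 (M : Matrix (Fin 2) (Fin 2) ℝ) (x : R2) :
    (mulV M x) 0 = M 0 0 * x 0 + M 0 1 * x 1 := by
  simp [mulV, Matrix.mulVec, dotProduct, Fin.sum_univ_two]
lemma mulV_apply1 (M : Matrix (Fin 2) (Fin 2) ℝ) (x : R2) :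
    (mulV M x) 1 = M 1 0 * x 0 + M 1 1 * x 1 := by
  simp [mulV, Matrix.mulVec, dotProduct, Fin.sum_univ_two]
lemma norm_R2 (v : R2) : ‖v‖ = Real.sqrt ((v 0)^2 + (v 1)^2) := by
  rw [EuclideanSpace.norm_eq, Fin.sum_univ_two]; simp [sq_abs]
lemma norm_mulV_rot (θ:ℝ) (v : R2) : ‖mulV (Rmat θ) v‖ = ‖v‖ := by
  rw [norm_R2, norm_R2, mulV_apply0, mulV_apply1]
  congr 1
  simp [Rmat]
  nlinarith [Real.sin_sq_add_cos_sq θ]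

lemma Qset_norm_bounds (α β ε : ℝ) (hβ0 : 0 ≤ β) (hβα : β ≤ α) (hα1 : α ≤ 1)
    (hε : ε ∈ Set.Ioo (0:ℝ) (1/32)) (j m ℓ : ℕ) (hi : memI0 α β (j, m, ℓ))
    {y : R2} (hy : y ∈ Qset α β ε j m ℓ) :
    (2:ℝ)^((j:ℝ))/4 ≤ ‖y‖ ∧ ‖y‖ ≤ 4 * (2:ℝ)^((j:ℝ)) := by
  obtain ⟨x, hx, rfl⟩ := hy
  rw [norm_mulV_rot]
  set w : R2 := mulV (Amat α β j) x + cvec α j m with hw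
  set E := (2:ℝ) ^ (α * (j:ℝ)) with hE
  set F := (2:ℝ) ^ (β * (j:ℝ)) with hF
  set P := (2:ℝ) ^ ((j:ℝ) - 1) with hP
  set T := (2:ℝ) ^ ((j:ℝ)) with hT
  have hEpos : 0 < E := Real.rpow_pos_of_pos two_pos _
  have hFpos : 0 < F := Real.rpow_pos_of_pos two_pos _
  have hTpos : 0 < T := Real.rpow_pos_of_pos two_pos _
  have hET : E ≤ T := by
    apply Real.rpow_le_rpow_of_exponent_le one_le_two
    nlinarith [Nat.cast_nonneg (α := ℝ) j]
  have hFT : F ≤ T := by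
    apply Real.rpow_le_rpow_of_exponent_le one_le_two
    nlinarith [Nat.cast_nonneg (α := ℝ) j]
  have hPT : P = T / 2 := by
    rw [hP, hT, Real.rpow_sub two_pos, Real.rpow_one]
  have hEc : E * (2:ℝ) ^ ((1-α) * (j:ℝ) - 1) = P := by
    rw [hE, hP, ← Real.rpow_add two_pos]; ring_nf
  have hm : (m:ℝ) ≤ (2:ℝ) ^ ((1-α) * (j:ℝ) - 1) + 1 := by
    have h1 : ((m:ℤ):ℝ) ≤ ((mjmax α j : ℤ) : ℝ) := by exact_mod_cast hi.2.1
    have h2 : ((mjmax α j : ℤ) : ℝ) < (2:ℝ) ^ ((1-α) * (j:ℝ) - 1) + 1 :=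
      Int.ceil_lt_add_one _
    push_cast at h1
    linarith
  have hmE : (m:ℝ) * E ≤ P + E := by
    have h1 : (m:ℝ) * E ≤ ((2:ℝ) ^ ((1-α) * (j:ℝ) - 1) + 1) * E :=
      mul_le_mul_of_nonneg_right hm hEpos.le
    have h2 : ((2:ℝ) ^ ((1-α) * (j:ℝ) - 1) + 1) * E = P + E := by
      rw [add_mul, one_mul, mul_comm, hEc]
    linarith
  have hx0 := hx.1
  have hx1 := hx.2
  have hε1 := hε.1
  have hε2 := hε.2
  have hw0 : w 0 = E * x 0 + (P + (m:ℝ) * E) := by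
    simp [hw, mulV_apply0, Amat, cvec, vec2, hE, hP]
  have hw1 : w 1 = F * x 1 := by
    simp [hw, mulV_apply1, Amat, cvec, vec2, hF]
  have hmnn : (0:ℝ) ≤ (m:ℝ) := Nat.cast_nonneg m
  have ha1 : -(ε * E) ≤ E * x 0 := by
    have := mul_le_mul_of_nonneg_left hx0.1.le hEpos.le
    linarith [this]
  have ha2 : ε * E ≤ (1/32) * T := by
    have h1 : ε * E ≤ (1/32) * E := mul_le_mul_of_nonneg_right hε2.le hEpos.le
    have h2 : (1/32) * E ≤ (1/32) * T := by linarith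
    linarith
  have ha3 : E * x 0 ≤ (1 + 1/32) * T := by
    have h1 : E * x 0 ≤ E * (1 + ε) := mul_le_mul_of_nonneg_left hx0.2.le hEpos.le
    have h2 : E * (1 + ε) ≤ T * (1 + 1/32) :=
      mul_le_mul hET (by linarith) (by linarith) hTpos.le
    linarith
  have hw0lb : T / 4 ≤ w 0 := by
    rw [hw0]
    have := mul_nonneg hmnn hEpos.le
    linarith [hPT.ge]
  have hw0ub : w 0 ≤ (3 + 1/32) * T := by
    rw [hw0]
    linarith [hPT.le, hmE, hET]
  have hw1b : |w 1| ≤ (1 + 1/32) * T := by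
    rw [hw1, abs_mul, abs_of_pos hFpos]
    have hax : |x 1| ≤ 1 + ε := abs_le.mpr ⟨by linarith [hx1.1], hx1.2.le⟩
    have h2 : F * |x 1| ≤ T * (1 + 1/32) :=
      mul_le_mul hFT (by linarith) (abs_nonneg _) hTpos.le
    linarith
  clear_value w T E F P
  clear hw0 hw1 hEc hm hmE ha1 ha2 ha3 hmnn hET hFT hPT hEpos hFpos hx
  rw [norm_R2]
  constructor
  · have h1 : T/4 ≤ Real.sqrt ((w 0)^2) := by
      rw [Real.sqrt_sq (by linarith : (0:ℝ) ≤ w 0)]; exact hw0lb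
    refine h1.trans (Real.sqrt_le_sqrt ?_)
    nlinarith [sq_nonneg (w 1)]
  · have h2 : (w 0)^2 + (w 1)^2 ≤ (4*T)^2 := by
      have := abs_le.mp hw1b
      nlinarith [hw0lb, hTpos.le]
    calc Real.sqrt ((w 0)^2 + (w 1)^2) ≤ Real.sqrt ((4*T)^2) := Real.sqrt_le_sqrt h2
      _ = 4 * T := Real.sqrt_sq (by positivity)

/-- Let `0 ≤ β ≤ α ≤ 1` and `0 ≤ β' ≤ α' ≤ 1`, and consider the wave
packet coverings `Q^{(α,β)}` and `Q^{(α',β')}` (built with `N = 10` and parameters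
`ε, ε' ∈ (0,1/32)` respectively). If `(j,m,ℓ) ∈ I₀^{(α,β)}`, `(j',m',ℓ') ∈ I₀^{(α',β')}`
and `Q_{j,m,ℓ}^{(α,β)} ∩ Q_{j',m',ℓ'}^{(α',β')} ≠ ∅`, then `|j − j'| ≤ 4`. -/
theorem wavePacket_two_coverings_scale_relation (α β ε α' β' ε' : ℝ)
    (hβ0 : 0 ≤ β) (hβα : β ≤ α) (hα1 : α ≤ 1)
    (hβ0' : 0 ≤ β') (hβα' : β' ≤ α') (hα1' : α' ≤ 1)
    (hε : ε ∈ Set.Ioo (0:ℝ) (1/32)) (hε' : ε' ∈ Set.Ioo (0:ℝ) (1/32))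
    (j m ℓ j' m' ℓ' : ℕ) (hi : memI0 α β (j, m, ℓ)) (hi' : memI0 α' β' (j', m', ℓ'))
    (h : (Qset α β ε j m ℓ ∩ Qset α' β' ε' j' m' ℓ').Nonempty) :
    |(j : ℤ) - (j' : ℤ)| ≤ 4 := by
  obtain ⟨y, hy1, hy2⟩ := h
  obtain ⟨l1, u1⟩ := Qset_norm_bounds α β ε hβ0 hβα hα1 hε j m ℓ hi hy1
  obtain ⟨l2, u2⟩ := Qset_norm_bounds α' β' ε' hβ0' hβα' hα1' hε' j' m' ℓ' hi' hy2
  have key : ∀ a b : ℕ, (2:ℝ)^((a:ℝ))/4 ≤ 4 * (2:ℝ)^((b:ℝ)) → (a:ℤ) ≤ (b:ℤ) + 4 := by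
    intro a b hab
    have h16 : (2:ℝ)^((a:ℝ)) ≤ (2:ℝ)^((b:ℝ)+4) := by
      rw [Real.rpow_add two_pos]
      have : ((2:ℝ)^((4:ℕ):ℝ)) = 16 := by
        rw [Real.rpow_natCast]; norm_num
      push_cast at this
      rw [this]
      linarith
    have := (Real.rpow_le_rpow_left_iff (one_lt_two)).mp h16
    exact_mod_cast this
  have h1 : (j:ℤ) ≤ (j':ℤ) + 4 := key j j' (by linarith)
  have h2 : (j':ℤ) ≤ (j:ℤ) + 4 := key j' j (by linarith)
  rw [abs_le]
  omega
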